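/- For any integer n ≥ 0 and any prime p, Σ_{k=1}^{p-1} (−1)^k B_{n+k} ≡ V_n (mod p), where V_n = Σ_{k=0}^{n} (−1)^{n−k} C(n,k) B_k. -/

import Mathlib

open Polynomial Finset

/-- Stirling numbers of the second kind. -/
def stirling2 : ℕ → ℕ → ℕ
  | 0, 0 => 1
  | 0, _ + 1 => 0
  | _ + 1, 0 => 0
  | n + 1, k + 1 => (k + 1) * stirling2 n (k + 1) + stirling2 n k

/-- Signed Stirling numbers of the first kind. -/
def stirling1 : ℕ → ℕ → ℤ
  | 0, 0 => 1
  | 0, _ + 1 => 0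
  | n + 1, 0 => -(n : ℤ) * stirling1 n 0
  | n + 1, k + 1 => stirling1 n k - (n : ℤ) * stirling1 n (k + 1)

/-- The Bell polynomial `B_m(x) = ∑_{j=0}^m S(m,j) x^j` over `ℤ`. -/
noncomputable def bellPoly (m : ℕ) : Polynomial ℤ :=
  ∑ j ∈ range (m + 1), (stirling2 m j : ℤ) • X ^ j

/-- The derangement polynomial `D_m(x) = ∑_{j=0}^m C(m,j) j! (x-1)^{m-j}` over `ℤ`. -/
noncomputable def derPoly (m : ℕ) : Polynomial ℤ :=
  ∑ j ∈ range (m + 1), ((m.choose j * j.factorial : ℕ) : ℤ) • (X - 1) ^ (m - j)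

/-- The Bell numbers `B_m = ∑_j S(m,j)`. -/
def bell (m : ℕ) : ℕ := ∑ j ∈ range (m + 1), stirling2 m j

lemma stirling2_zero_zero : stirling2 0 0 = 1 := rfl
lemma stirling2_rec (n k : ℕ) :
    stirling2 (n + 1) (k + 1) = (k + 1) * stirling2 n (k + 1) + stirling2 n k := rfl
lemma bell_def (m : ℕ) : bell m = ∑ j ∈ range (m + 1), stirling2 m j := rfl

lemma stirling2_eq_zero : ∀ {n k : ℕ}, n < k → stirling2 n k = 0 := by
  intro n
  induction n with
  | zero => intro k h; cases k with
    | zero => omega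
    | succ k => rfl
  | succ n ih =>
    intro k h
    cases k with
    | zero => omega
    | succ k =>
      show (k + 1) * stirling2 n (k + 1) + stirling2 n k = 0
      rw [ih (by omega), ih (by omega), mul_zero]

lemma stirling2_self : ∀ n : ℕ, stirling2 n n = 1 := by
  intro n
  induction n with
  | zero => rfl
  | succ n ih =>
    show (n + 1) * stirling2 n (n + 1) + stirling2 n n = 1
    rw [stirling2_eq_zero (by omega), ih, mul_zero]

lemma stirling2_zero_left : ∀ n : ℕ, stirling2 (n + 1) 0 = 0 := fun _ => rfl

lemma stirling2_succ_succ (n : ℕ) : ∀ j : ℕ,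
    stirling2 (n + 1) (j + 1) = ∑ k ∈ range (n + 1), n.choose k * stirling2 k j := by
  induction n with
  | zero =>
    intro j
    show (j + 1) * stirling2 0 (j + 1) + stirling2 0 j = _
    rw [stirling2_eq_zero (by omega), mul_zero, zero_add, sum_range_one,
      Nat.choose_self, one_mul]
  | succ n ih =>
    intro j
    have A2 : ∑ k ∈ range (n + 2), n.choose k * stirling2 k j = stirling2 (n + 1) (j + 1) := by
      rw [sum_range_succ, Nat.choose_succ_self, zero_mul, add_zero, ih]
    rw [sum_range_succ' (fun k => n.choose k * stirling2 k j) (n + 1)] at A2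
    have key : ∑ k ∈ range (n + 2), (n + 1).choose k * stirling2 k j
        = stirling2 (n + 1) (j + 1) + ∑ k ∈ range (n + 1), n.choose k * stirling2 (k + 1) j := by
      rw [sum_range_succ' (fun k => (n + 1).choose k * stirling2 k j) (n + 1)]
      have pas : ∀ k, (n + 1).choose (k + 1) * stirling2 (k + 1) j
          = n.choose k * stirling2 (k + 1) j + n.choose (k + 1) * stirling2 (k + 1) j := by
        intro k; rw [Nat.choose_succ_succ, Nat.add_mul]
      simp_rw [pas]
      rw [sum_add_distrib]
      have h0 : (n + 1).choose 0 * stirling2 0 j = n.choose 0 * stirling2 0 j := by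
        simp
      rw [h0, add_assoc, A2]
      ring
    rw [key]
    cases j with
    | zero =>
      have h2 : ∀ k, stirling2 (k + 1) 0 = 0 := fun _ => rfl
      simp_rw [h2, mul_zero, sum_const_zero, add_zero]
      show (0 + 1) * stirling2 (n + 1) (0 + 1) + stirling2 (n + 1) 0 = _
      simp [stirling2_zero_left]
    | succ j =>
      have expand : ∀ k, n.choose k * stirling2 (k + 1) (j + 1)
          = (j + 1) * (n.choose k * stirling2 k (j + 1)) + n.choose k * stirling2 k j := by
        intro k
        show n.choose k * ((j + 1) * stirling2 k (j + 1) + stirling2 k j) = _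
        ring
      simp_rw [expand]
      rw [sum_add_distrib, ← mul_sum, ← ih, ← ih]
      show (j + 1 + 1) * stirling2 (n + 1) (j + 1 + 1) + stirling2 (n + 1) (j + 1) = _
      ring

lemma sum_stirling2_extend {k m : ℕ} (h : k + 1 ≤ m) :
    ∑ j ∈ range m, stirling2 k j = bell k := by
  rw [bell]
  apply (Finset.sum_subset (by simpa using h) _).symm
  intro j _ hj
  exact stirling2_eq_zero (by simp at hj; omega)

lemma bell_succ (n : ℕ) : bell (n + 1) = ∑ k ∈ range (n + 1), n.choose k * bell k := by
  rw [bell, sum_range_succ' (fun j => stirling2 (n + 1) j) (n + 1), stirling2_zero_left,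
    add_zero]
  simp_rw [stirling2_succ_succ]
  rw [Finset.sum_comm]
  refine Finset.sum_congr rfl fun k hk => ?_
  rw [← Finset.mul_sum, sum_stirling2_extend (by simp at hk; omega)]

lemma alt_sum (N : ℕ) :
    ∑ m ∈ range (N + 1), (-1 : ℤ) ^ (N - m) * N.choose m = if N = 0 then 1 else 0 := by
  have h : ∀ m ∈ range (N + 1), (-1 : ℤ) ^ (N - m) * N.choose m
      = (-1) ^ N * ((-1) ^ m * N.choose m) := by
    intro m hm
    simp only [mem_range] at hm
    have : N - m + 2 * m = N + m := by omega
    have e : ((-1 : ℤ)) ^ (N + m) = (-1) ^ (N - m) := by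
      rw [← this, pow_add, pow_mul]; norm_num
    rw [← mul_assoc, ← pow_add, e]
  rw [Finset.sum_congr rfl h, ← Finset.mul_sum, Int.alternating_sum_range_choose]
  split_ifs with h0
  · subst h0; norm_num
  · ring

lemma ortho (n j : ℕ) :
    ∑ k ∈ range (n + 1), (-1 : ℤ) ^ (n - k) * n.choose k * k.choose j
      = if j = n then 1 else 0 := by
  by_cases hj : j ≤ n
  · have hsplit : range (n + 1) = range j ∪ Ico j (n + 1) := by
      rw [Finset.range_eq_Ico, Finset.range_eq_Ico, Finset.Ico_union_Ico_eq_Ico (by omega) (by omega)]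
    rw [hsplit, Finset.sum_union (by rw [Finset.range_eq_Ico]; exact Finset.Ico_disjoint_Ico_consecutive 0 j (n+1))]
    have h1 : ∑ k ∈ range j, (-1 : ℤ) ^ (n - k) * n.choose k * k.choose j = 0 := by
      apply Finset.sum_eq_zero
      intro k hk
      simp only [mem_range] at hk
      rw [Nat.choose_eq_zero_of_lt hk]
      simp
    rw [h1, zero_add, Finset.sum_Ico_eq_sum_range]
    have h2 : ∀ m ∈ range (n + 1 - j), (-1 : ℤ) ^ (n - (j + m)) * n.choose (j + m) * (j + m).choose j
        = (n.choose j : ℤ) * ((-1) ^ (n - j - m) * (n - j).choose m) := by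
      intro m hm
      simp only [mem_range] at hm
      have hc : n.choose (j + m) * (j + m).choose j = n.choose j * (n - j).choose m := by
        have := Nat.choose_mul (n := n) (k := j + m) (s := j) (by omega)
        simpa using this
      have hs : n - (j + m) = n - j - m := by omega
      rw [hs]
      push_cast
      rw [mul_assoc, ← Nat.cast_mul, hc, Nat.cast_mul]
      ring
    rw [Finset.sum_congr rfl h2, ← Finset.mul_sum]
    have h3 : n + 1 - j = (n - j) + 1 := by omega
    rw [h3, alt_sum]
    split_ifs with h4 h5 h5
    · subst h5; simp
    · omega
    · omega
    · ring
  · rw [if_neg (by omega)]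
    apply Finset.sum_eq_zero
    intro k hk
    simp only [mem_range] at hk
    rw [Nat.choose_eq_zero_of_lt (show k < j by omega)]
    simp

lemma bell_inv (n : ℕ) :
    ∑ k ∈ range (n + 1), (-1 : ℤ) ^ (n - k) * n.choose k * bell (k + 1) = bell n := by
  have hb : ∀ k ∈ range (n + 1), ((bell (k + 1) : ℤ))
      = ∑ j ∈ range (n + 1), (k.choose j : ℤ) * bell j := by
    intro k hk
    simp only [mem_range] at hk
    have : bell (k + 1) = ∑ j ∈ range (n + 1), k.choose j * bell j := by
      rw [bell_succ]
      apply Finset.sum_subset (by simp; omega)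
      intro j _ hj
      rw [Nat.choose_eq_zero_of_lt (by simp at hj; omega), zero_mul]
    exact_mod_cast congrArg (Nat.cast : ℕ → ℤ) this
  calc ∑ k ∈ range (n + 1), (-1 : ℤ) ^ (n - k) * n.choose k * bell (k + 1)
      = ∑ k ∈ range (n + 1), ∑ j ∈ range (n + 1),
          (-1 : ℤ) ^ (n - k) * n.choose k * (k.choose j * bell j) := by
        refine Finset.sum_congr rfl fun k hk => ?_
        rw [hb k hk, Finset.mul_sum]
    _ = ∑ j ∈ range (n + 1), (∑ k ∈ range (n + 1),
          (-1 : ℤ) ^ (n - k) * n.choose k * k.choose j) * bell j := by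
        rw [Finset.sum_comm]
        refine Finset.sum_congr rfl fun j _ => ?_
        rw [Finset.sum_mul]
        refine Finset.sum_congr rfl fun k _ => ?_
        ring
    _ = bell n := by
        simp_rw [ortho]
        rw [Finset.sum_eq_single n (fun j _ hj => by rw [if_neg hj, zero_mul])
          (fun h => absurd (self_mem_range_succ n) h)]
        rw [if_pos rfl, one_mul]

lemma V_rec (n : ℕ) :
    ∑ k ∈ range (n + 2), (-1 : ℤ) ^ (n + 1 - k) * (n + 1).choose k * bell k
      = bell n - ∑ k ∈ range (n + 1), (-1 : ℤ) ^ (n - k) * n.choose k * bell k := by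
  rw [sum_range_succ' (fun k => (-1 : ℤ) ^ (n + 1 - k) * (n + 1).choose k * bell k) (n + 1)]
  have e1 : ∀ k, ((-1 : ℤ)) ^ (n + 1 - (k + 1)) * ((n + 1).choose (k + 1)) * bell (k + 1)
      = (-1) ^ (n - k) * n.choose k * bell (k + 1)
        + (-1) ^ (n - k) * n.choose (k + 1) * bell (k + 1) := by
    intro k
    have : n + 1 - (k + 1) = n - k := by omega
    rw [this, Nat.choose_succ_succ]
    push_cast
    ring
  simp_rw [e1]
  rw [sum_add_distrib, bell_inv]
  have e2 : ∑ k ∈ range (n + 1), (-1 : ℤ) ^ (n - k) * n.choose (k + 1) * bell (k + 1)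
      = -(∑ k ∈ range (n + 1), (-1 : ℤ) ^ (n - k) * n.choose k * bell k) + (-1) ^ n * bell 0 := by
    rw [sum_range_succ (fun k => (-1 : ℤ) ^ (n - k) * n.choose (k + 1) * bell (k + 1)) n,
      Nat.choose_succ_self]
    rw [sum_range_succ' (fun k => (-1 : ℤ) ^ (n - k) * n.choose k * bell k) n]
    have e3 : ∀ k ∈ range n, ((-1 : ℤ)) ^ (n - k) * n.choose (k + 1) * bell (k + 1)
        = -((-1) ^ (n - (k + 1)) * n.choose (k + 1) * bell (k + 1)) := by
      intro k hk
      simp only [mem_range] at hk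
      have : n - k = (n - (k + 1)) + 1 := by omega
      rw [this, pow_succ]
      ring
    rw [Finset.sum_congr rfl e3, Finset.sum_neg_distrib]
    simp only [Nat.sub_self, Nat.sub_zero, pow_zero, Nat.choose_zero_right, Nat.cast_one,
      mul_zero, zero_mul, mul_one, one_mul, add_zero]
    ring
  rw [e2]
  have h10 : n + 1 - 0 = n + 1 := rfl
  rw [h10]
  simp only [Nat.choose_zero_right, Nat.cast_one, mul_one, one_mul]
  rw [pow_succ]
  ring

lemma stirling2_one : ∀ k : ℕ, stirling2 1 k = if k = 1 then 1 else 0 := by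
  intro k
  match k with
  | 0 => simpa using stirling2_zero_left 0
  | 1 => simpa using stirling2_self 1
  | (j+2) => rw [stirling2_eq_zero (by omega), if_neg (by omega)]

lemma stirling2_formula : ∀ (n : ℕ), ∀ (k : ℕ), (k.factorial : ℤ) * stirling2 n k
    = ∑ i ∈ range (k + 1), (-1 : ℤ) ^ (k - i) * k.choose i * (i : ℤ) ^ n := by
  intro n
  induction n with
  | zero =>
    intro k
    cases k with
    | zero => simp [stirling2_self 0]
    | succ j =>
      rw [stirling2_eq_zero (by omega)]
      simp_rw [pow_zero, mul_one]
      have := congrArg (fun s : ℤ => -s) (Int.alternating_sum_range_choose_of_ne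
        (n := j + 1) (by omega))
      -- direct: rewrite (-1)^(j+1-i) = (-1)^(j+1)*(-1)^i as in alt_sum; easier: reuse approach
      have h : ∀ m ∈ range (j + 2), (-1 : ℤ) ^ (j + 1 - m) * (j + 1).choose m
          = (-1) ^ (j + 1) * ((-1) ^ m * (j + 1).choose m) := by
        intro m hm
        simp only [mem_range] at hm
        have h2 : j + 1 - m + 2 * m = j + 1 + m := by omega
        have e : ((-1 : ℤ)) ^ (j + 1 + m) = (-1) ^ (j + 1 - m) := by
          rw [← h2, pow_add, pow_mul]; norm_num
        rw [← mul_assoc, ← pow_add, e]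
      rw [Finset.sum_congr rfl h, ← Finset.mul_sum, Int.alternating_sum_range_choose_of_ne
        (by omega : j + 1 ≠ 0)]
      simp
  | succ n ih =>
    intro k
    cases k with
    | zero =>
      rw [stirling2_zero_left]
      simp
    | succ j =>
      have lhs : (((j + 1).factorial : ℤ)) * stirling2 (n + 1) (j + 1)
          = (j + 1) * (((j + 1).factorial : ℤ) * stirling2 n (j + 1))
            + (j + 1) * ((j.factorial : ℤ) * stirling2 n j) := by
        rw [stirling2_rec]
        push_cast [Nat.factorial_succ]
        ring
      rw [lhs, ih, ih]
      -- now prove RHS' = sum for n+1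
      have hg : ∑ i ∈ range (j + 2), (-1 : ℤ) ^ (j + 1 - i) * (j + 1).choose i * (i : ℤ) ^ (n + 1)
          = (j + 1) * ∑ i ∈ range (j + 1), (-1 : ℤ) ^ (j - i) * j.choose i * ((i : ℤ) + 1) ^ n := by
        rw [sum_range_succ' (fun i => (-1 : ℤ) ^ (j + 1 - i) * (j + 1).choose i * (i : ℤ) ^ (n + 1)) (j + 1)]
        have h0 : ((0 : ℕ) : ℤ) ^ (n + 1) = 0 := by simp
        rw [Finset.mul_sum]
        have hterm : ∀ i ∈ range (j + 1),
            (-1 : ℤ) ^ (j + 1 - (i + 1)) * ((j + 1).choose (i + 1)) * ((i + 1 : ℕ) : ℤ) ^ (n + 1)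
            = (j + 1) * ((-1 : ℤ) ^ (j - i) * j.choose i * ((i : ℤ) + 1) ^ n) := by
          intro i hi
          have e1 : j + 1 - (i + 1) = j - i := by omega
          have e2 : (j + 1) * j.choose i = (j + 1).choose (i + 1) * (i + 1) :=
            Nat.add_one_mul_choose_eq j i
          have e2' : ((j : ℤ) + 1) * j.choose i = ((j + 1).choose (i + 1) : ℤ) * (i + 1) := by
            exact_mod_cast e2
          rw [e1]
          push_cast
          rw [pow_succ]
          linear_combination (-((-1 : ℤ) ^ (j - i) * ((i : ℤ) + 1) ^ n)) * e2'
        rw [Finset.sum_congr rfl hterm]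
        simp
      rw [hg]
      have hfg : ∑ i ∈ range (j + 1), (-1 : ℤ) ^ (j - i) * j.choose i * ((i : ℤ) + 1) ^ n
          = (∑ i ∈ range (j + 2), (-1 : ℤ) ^ (j + 1 - i) * (j + 1).choose i * (i : ℤ) ^ n)
            + ∑ i ∈ range (j + 1), (-1 : ℤ) ^ (j - i) * j.choose i * (i : ℤ) ^ n := by
        have expand : ∑ i ∈ range (j + 2), (-1 : ℤ) ^ (j + 1 - i) * (j + 1).choose i * (i : ℤ) ^ n
            = (∑ i ∈ range (j + 1), (-1 : ℤ) ^ (j - i) * j.choose i * ((i : ℤ) + 1) ^ n)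
              + (∑ i ∈ range (j + 1), (-1 : ℤ) ^ (j - i) * (j.choose (i + 1)) * ((i : ℤ) + 1) ^ n)
              + (-1 : ℤ) ^ (j + 1) * (0 : ℤ) ^ n := by
          rw [sum_range_succ' (fun i => (-1 : ℤ) ^ (j + 1 - i) * (j + 1).choose i * (i : ℤ) ^ n) (j + 1)]
          have hterm : ∀ i ∈ range (j + 1),
              (-1 : ℤ) ^ (j + 1 - (i + 1)) * ((j + 1).choose (i + 1)) * ((i + 1 : ℕ) : ℤ) ^ n
              = (-1 : ℤ) ^ (j - i) * j.choose i * ((i : ℤ) + 1) ^ n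
                + (-1 : ℤ) ^ (j - i) * (j.choose (i + 1)) * ((i : ℤ) + 1) ^ n := by
            intro i hi
            have e1 : j + 1 - (i + 1) = j - i := by omega
            rw [e1, Nat.choose_succ_succ]
            push_cast
            ring
          rw [Finset.sum_congr rfl hterm, sum_add_distrib]
          simp only [Nat.sub_zero, Nat.choose_zero_right, Nat.cast_one, Nat.cast_zero,
            mul_one, one_mul, pow_succ]
        have hH : ∑ i ∈ range (j + 1), (-1 : ℤ) ^ (j - i) * (j.choose (i + 1)) * ((i : ℤ) + 1) ^ n
            = -(∑ i ∈ range (j + 1), (-1 : ℤ) ^ (j - i) * j.choose i * (i : ℤ) ^ n)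
              + (-1 : ℤ) ^ j * (0 : ℤ) ^ n := by
          rw [sum_range_succ (fun i => (-1 : ℤ) ^ (j - i) * (j.choose (i + 1)) * ((i : ℤ) + 1) ^ n) j,
            Nat.choose_succ_self]
          rw [sum_range_succ' (fun i => (-1 : ℤ) ^ (j - i) * j.choose i * (i : ℤ) ^ n) j]
          have hterm : ∀ i ∈ range j,
              (-1 : ℤ) ^ (j - i) * (j.choose (i + 1)) * ((i : ℤ) + 1) ^ n
              = -((-1 : ℤ) ^ (j - (i + 1)) * (j.choose (i + 1)) * (((i + 1 : ℕ)) : ℤ) ^ n) := by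
            intro i hi
            simp only [mem_range] at hi
            have e1 : j - i = (j - (i + 1)) + 1 := by omega
            rw [e1, pow_succ]
            push_cast
            ring
          rw [Finset.sum_congr rfl hterm, Finset.sum_neg_distrib]
          simp only [Nat.sub_self, Nat.sub_zero, pow_zero, Nat.choose_zero_right, Nat.cast_one,
            mul_one, one_mul, zero_mul, mul_zero, add_zero]
          push_cast
          ring
        rw [expand, hH, pow_succ]
        ring
      rw [hfg]
      ring

lemma stirling2_zero_right : ∀ k, stirling2 0 k = if k = 0 then 1 else 0 := by
  intro k
  cases k with
  | zero => simpa using stirling2_zero_zero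
  | succ j => rw [stirling2_eq_zero (by omega), if_neg (by omega)]

section
variable (p : ℕ) [hp : Fact p.Prime]

lemma stirling2_formula_zmod (n k : ℕ) : ((k.factorial : ZMod p)) * stirling2 n k
    = ∑ i ∈ range (k + 1), (-1 : ZMod p) ^ (k - i) * k.choose i * (i : ZMod p) ^ n := by
  have := congrArg (fun z : ℤ => (z : ZMod p)) (stirling2_formula n k)
  push_cast at this
  exact this

lemma stirling2_p (k : ℕ) : ((stirling2 p k : ZMod p))
    = (if k = 1 then 1 else 0) + (if k = p then 1 else 0) := by
  have hp2 := hp.out.two_le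
  rcases lt_trichotomy k p with hk | hk | hk
  · -- k < p
    have hfac : ((k.factorial : ZMod p)) ≠ 0 := by
      rw [Ne, ZMod.natCast_eq_zero_iff]
      intro hdvd
      exact absurd (((Nat.Prime.dvd_factorial hp.out)).mp hdvd) (by omega)
    have h1 : ((k.factorial : ZMod p)) * stirling2 p k
        = ((k.factorial : ZMod p)) * stirling2 1 k := by
      rw [stirling2_formula_zmod, stirling2_formula_zmod]
      refine Finset.sum_congr rfl fun i _ => ?_
      rw [ZMod.pow_card, pow_one]
    have h2 := mul_left_cancel₀ hfac h1
    rw [h2, stirling2_one]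
    have h3 : (if k = p then (1 : ZMod p) else 0) = 0 := if_neg (by omega)
    rw [h3, add_zero]
    split_ifs <;> simp
  · subst hk
    rw [stirling2_self, if_neg (by omega), if_pos rfl]
    simp
  · rw [stirling2_eq_zero hk, if_neg (by omega), if_neg (by omega)]
    simp

lemma touchard_stirling : ∀ (n : ℕ), ∀ (k : ℕ), ((stirling2 (n + p) k : ZMod p))
    = (stirling2 (n + 1) k : ZMod p)
      + (if p ≤ k then (stirling2 n (k - p) : ZMod p) else 0) := by
  have hp2 := hp.out.two_le
  intro n
  induction n with
  | zero =>
    intro k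
    rw [zero_add, stirling2_p, stirling2_one]
    simp_rw [stirling2_zero_right]
    have hite : (if p ≤ k then ((if k - p = 0 then 1 else 0 : ℕ) : ZMod p) else 0)
        = (if k = p then (1 : ZMod p) else 0) := by
      by_cases h1 : p ≤ k
      · rw [if_pos h1]
        by_cases h2 : k = p
        · rw [if_pos h2, if_pos (by omega)]; simp
        · rw [if_neg h2, if_neg (by omega)]; simp
      · rw [if_neg h1, if_neg (show ¬ k = p by omega)]
    rw [hite]
    split_ifs <;> simp
  | succ n ih =>
    intro k
    cases k with
    | zero =>
      have e : n + 1 + p = (n + p) + 1 := by omega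
      rw [e, stirling2_zero_left, stirling2_zero_left, if_neg (by omega)]
      simp
    | succ k =>
      have e : n + 1 + p = (n + p) + 1 := by omega
      have L : ((stirling2 (n + 1 + p) (k + 1) : ZMod p))
          = ((k : ZMod p) + 1) * stirling2 (n + p) (k + 1) + stirling2 (n + p) k := by
        rw [e, stirling2_rec]; push_cast; ring
      have R : ((stirling2 (n + 1 + 1) (k + 1) : ZMod p))
          = ((k : ZMod p) + 1) * stirling2 (n + 1) (k + 1) + stirling2 (n + 1) k := by
        rw [stirling2_rec]; push_cast; ring
      rw [L, ih (k + 1), ih k, R]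
      rcases lt_trichotomy (k + 1) p with hk | hk | hk
      · rw [if_neg (show ¬ p ≤ k + 1 by omega), if_neg (show ¬ p ≤ k by omega),
          if_neg (show ¬ p ≤ k + 1 by omega)]
        ring
      · -- k + 1 = p
        have h0 : k + 1 - p = 0 := by omega
        rw [if_pos (show p ≤ k + 1 by omega), if_neg (show ¬ p ≤ k by omega),
          if_pos (show p ≤ k + 1 by omega), h0, stirling2_zero_left n]
        have hcast : ((k : ZMod p) + 1) = 0 := by
          have h4 : ((k + 1 : ℕ) : ZMod p) = 0 := by rw [hk]; exact ZMod.natCast_self p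
          push_cast at h4
          exact h4
        rw [hcast]
        push_cast
        ring
      · -- p ≤ k
        have e1 : k + 1 - p = (k - p) + 1 := by omega
        rw [if_pos (show p ≤ k + 1 by omega), if_pos (show p ≤ k by omega),
          if_pos (show p ≤ k + 1 by omega), e1]
        have R2 : ((stirling2 (n + 1) (k - p + 1) : ZMod p))
            = ((k - p : ℕ) : ZMod p) * stirling2 n (k - p + 1) + stirling2 n (k - p + 1)
              + stirling2 n (k - p) := by
          rw [stirling2_rec]; push_cast; ring
        rw [R2]
        have hcast : ((k : ZMod p) + 1) = ((k - p : ℕ) : ZMod p) + 1 := by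
          have h5 : ((k - p : ℕ) : ZMod p) = (k : ZMod p) - (p : ZMod p) := by
            push_cast [Nat.cast_sub (by omega : p ≤ k)]
            ring
          rw [h5, ZMod.natCast_self]
          ring
        rw [hcast]
        ring

lemma touchard (n : ℕ) : ((bell (n + p) : ZMod p)) = (bell (n + 1) : ZMod p) + bell n := by
  have hp2 := hp.out.two_le
  rw [bell_def]
  push_cast
  simp_rw [touchard_stirling]
  rw [sum_add_distrib]
  have h1 : ∑ j ∈ range (n + p + 1), ((stirling2 (n + 1) j : ZMod p)) = (bell (n + 1) : ZMod p) := by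
    rw [← Nat.cast_sum]
    rw [sum_stirling2_extend (by omega)]
  have h2 : ∑ j ∈ range (n + p + 1), (if p ≤ j then ((stirling2 n (j - p) : ZMod p)) else 0)
      = (bell n : ZMod p) := by
    have hsplit : range (n + p + 1) = range p ∪ Ico p (n + p + 1) := by
      rw [Finset.range_eq_Ico, Finset.range_eq_Ico, Finset.Ico_union_Ico_eq_Ico (by omega) (by omega)]
    rw [hsplit, Finset.sum_union (by rw [Finset.range_eq_Ico]; exact Finset.Ico_disjoint_Ico_consecutive 0 p _)]
    have hz : ∑ j ∈ range p, (if p ≤ j then ((stirling2 n (j - p) : ZMod p)) else 0) = 0 := by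
      apply Finset.sum_eq_zero
      intro j hj
      simp only [mem_range] at hj
      rw [if_neg (by omega)]
    rw [hz, zero_add, Finset.sum_Ico_eq_sum_range]
    have : ∀ m ∈ range (n + p + 1 - p), (if p ≤ p + m then ((stirling2 n (p + m - p) : ZMod p)) else 0)
        = ((stirling2 n m : ZMod p)) := by
      intro m _
      rw [if_pos (by omega)]
      have hm : p + m - p = m := by omega
      rw [hm]
    rw [Finset.sum_congr rfl this]
    have e : n + p + 1 - p = n + 1 := by omega
    rw [e, ← Nat.cast_sum, sum_stirling2_extend (by omega)]
  rw [h1, h2]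


lemma bell_zero : bell 0 = 1 := by
  rw [bell_def, sum_range_one, stirling2_zero_zero]

section
variable (p : ℕ) [hp : Fact p.Prime]

lemma stirling2_formula_zmod' (n k : ℕ) : ((k.factorial : ZMod p)) * stirling2 n k
    = ∑ i ∈ range (k + 1), (-1 : ZMod p) ^ (k - i) * k.choose i * (i : ZMod p) ^ n := by
  have := congrArg (fun z : ℤ => (z : ZMod p)) (stirling2_formula n k)
  push_cast at this
  exact this

lemma cast_pred : ((p - 1 : ℕ) : ZMod p) = -1 := by
  have hp2 := hp.out.two_le
  push_cast [Nat.cast_sub (by omega : 1 ≤ p)]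
  simp [ZMod.natCast_self]

lemma geom_neg (i : ℕ) (hi : i < p) :
    ∑ k ∈ range p, (-(i : ZMod p)) ^ k = if i = p - 1 then 0 else 1 := by
  have hp2 := hp.out.two_le
  by_cases hi1 : i = p - 1
  · subst hi1
    rw [if_pos rfl, cast_pred]
    simp [Finset.sum_const, ZMod.natCast_self]
  · rw [if_neg hi1]
    have hne : -(i : ZMod p) ≠ 1 := by
      intro h
      have h2 : (i : ZMod p) = ((p - 1 : ℕ) : ZMod p) := by
        rw [cast_pred]
        linear_combination -h
      have := congrArg ZMod.val h2
      rw [ZMod.val_cast_of_lt hi, ZMod.val_cast_of_lt (by omega : p - 1 < p)] at this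
      exact hi1 this
    rw [geom_sum_eq hne p, ZMod.pow_card, div_self (sub_ne_zero.mpr hne)]

lemma fac_ne_zero {j : ℕ} (hj : j < p) : ((j.factorial : ZMod p)) ≠ 0 := by
  rw [Ne, ZMod.natCast_eq_zero_iff]
  intro hdvd
  exact absurd ((Nat.Prime.dvd_factorial hp.out).mp hdvd) (by omega)

lemma S2_eq : ∑ k ∈ range p, (-1 : ZMod p) ^ k * (bell k : ZMod p) = 2 := by
  have hp2 := hp.out.two_le
  have hbell : ∀ k ∈ range p, ((bell k : ZMod p)) = ∑ j ∈ range p, (stirling2 k j : ZMod p) := by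
    intro k hk
    simp only [mem_range] at hk
    rw [← Nat.cast_sum, sum_stirling2_extend (by omega)]
  have key : ∀ j ∈ range p, ∑ k ∈ range p, (-1 : ZMod p) ^ k * (stirling2 k j : ZMod p)
      = (if j = 0 then 1 else 0) - (if j = p - 1 then ((p - 1).factorial : ZMod p)⁻¹ else 0) := by
    intro j hj
    simp only [mem_range] at hj
    have hfac := fac_ne_zero p hj
    have hmul : (j.factorial : ZMod p) * ∑ k ∈ range p, (-1 : ZMod p) ^ k * (stirling2 k j : ZMod p)
        = (if j = 0 then 1 else 0) - (if j = p - 1 then 1 else 0) := by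
      rw [Finset.mul_sum]
      have step1 : ∀ k ∈ range p, (j.factorial : ZMod p) * ((-1 : ZMod p) ^ k * (stirling2 k j : ZMod p))
          = ∑ i ∈ range (j + 1), (-1 : ZMod p) ^ (j - i) * j.choose i * (-(i : ZMod p)) ^ k := by
        intro k _
        have e1 : (j.factorial : ZMod p) * ((-1 : ZMod p) ^ k * (stirling2 k j : ZMod p))
            = (-1 : ZMod p) ^ k * ((j.factorial : ZMod p) * stirling2 k j) := by ring
        rw [e1, stirling2_formula_zmod', Finset.mul_sum]
        refine Finset.sum_congr rfl fun i _ => ?_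
        rw [neg_pow]
        ring
      rw [Finset.sum_congr rfl step1, Finset.sum_comm]
      have step2 : ∀ i ∈ range (j + 1),
          ∑ k ∈ range p, (-1 : ZMod p) ^ (j - i) * j.choose i * (-(i : ZMod p)) ^ k
          = (-1 : ZMod p) ^ (j - i) * j.choose i * (if i = p - 1 then 0 else 1) := by
        intro i hi
        simp only [mem_range] at hi
        rw [← Finset.mul_sum, geom_neg p i (by omega)]
      rw [Finset.sum_congr rfl step2]
      have alt : ∑ i ∈ range (j + 1), (-1 : ZMod p) ^ (j - i) * (j.choose i : ZMod p)
          = if j = 0 then 1 else 0 := by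
        have hZ := congrArg (fun z : ℤ => (z : ZMod p))
          (alt_sum j)
        push_cast at hZ
        split_ifs at hZ ⊢ <;> simpa using hZ
      by_cases hjp : j = p - 1
      · subst hjp
        rw [sum_range_succ]
        have last : (-1 : ZMod p) ^ (p - 1 - (p - 1)) * ((p - 1).choose (p - 1) : ZMod p)
            * (if p - 1 = p - 1 then (0 : ZMod p) else 1) = 0 := by
          rw [if_pos rfl, mul_zero]
        rw [last, add_zero]
        have rest : ∀ i ∈ range (p - 1),
            (-1 : ZMod p) ^ (p - 1 - i) * ((p - 1).choose i : ZMod p) * (if i = p - 1 then (0:ZMod p) else 1)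
            = (-1 : ZMod p) ^ (p - 1 - i) * ((p - 1).choose i : ZMod p) := by
          intro i hi
          simp only [mem_range] at hi
          rw [if_neg (by omega), mul_one]
        rw [Finset.sum_congr rfl rest]
        have := alt
        rw [sum_range_succ] at this
        have e2 : p - 1 - (p - 1) = 0 := by omega
        rw [e2, pow_zero, Nat.choose_self, Nat.cast_one, one_mul, if_neg (by omega)] at this
        have e3 : ∑ i ∈ range (p - 1), (-1 : ZMod p) ^ (p - 1 - i) * ((p - 1).choose i : ZMod p) = -1 := by
          linear_combination this
        rw [e3, if_neg (by omega), if_pos rfl]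
        ring
      · have rest : ∀ i ∈ range (j + 1),
            (-1 : ZMod p) ^ (j - i) * (j.choose i : ZMod p) * (if i = p - 1 then (0:ZMod p) else 1)
            = (-1 : ZMod p) ^ (j - i) * (j.choose i : ZMod p) := by
          intro i hi
          simp only [mem_range] at hi
          rw [if_neg (by omega), mul_one]
        rw [Finset.sum_congr rfl rest, alt, if_neg hjp, sub_zero]
    have expand : ∑ k ∈ range p, (-1 : ZMod p) ^ k * (stirling2 k j : ZMod p)
        = (j.factorial : ZMod p)⁻¹ * ((if j = 0 then 1 else 0) - (if j = p - 1 then 1 else 0)) := by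
      rw [← hmul, inv_mul_cancel_left₀ hfac]
    rw [expand]
    split_ifs with h1 h2 h2
    · omega
    · subst h1; simp
    · subst h2
      rw [zero_sub, mul_neg, mul_one, zero_sub]
    · simp
  calc ∑ k ∈ range p, (-1 : ZMod p) ^ k * (bell k : ZMod p)
      = ∑ k ∈ range p, ∑ j ∈ range p, (-1 : ZMod p) ^ k * (stirling2 k j : ZMod p) := by
        refine Finset.sum_congr rfl fun k hk => ?_
        rw [hbell k hk, Finset.mul_sum]
    _ = ∑ j ∈ range p, ∑ k ∈ range p, (-1 : ZMod p) ^ k * (stirling2 k j : ZMod p) :=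
        Finset.sum_comm
    _ = ∑ j ∈ range p, ((if j = 0 then (1:ZMod p) else 0) - (if j = p - 1 then ((p - 1).factorial : ZMod p)⁻¹ else 0)) :=
        Finset.sum_congr rfl key
    _ = 2 := by
        rw [Finset.sum_sub_distrib]
        rw [Finset.sum_ite_eq' (range p) 0 (fun _ => (1 : ZMod p))]
        rw [Finset.sum_ite_eq' (range p) (p - 1) (fun _ => ((p - 1).factorial : ZMod p)⁻¹)]
        rw [if_pos (by simp; omega), if_pos (by simp; omega)]
        rw [ZMod.wilsons_lemma]
        norm_num

lemma base_sum : ∑ k ∈ Icc 1 (p - 1), (-1 : ZMod p) ^ k * (bell k : ZMod p) = 1 := by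
  have hp2 := hp.out.two_le
  have hins : range p = insert 0 (Icc 1 (p - 1)) := by
    ext x; simp; omega
  have h := S2_eq p
  rw [hins, Finset.sum_insert (by simp)] at h
  rw [pow_zero, one_mul, bell_zero] at h
  push_cast at h
  linear_combination h

end

section
variable (p : ℕ) [hp : Fact p.Prime]

lemma telescope {R : Type*} [CommRing R] (c : ℕ → R) :
    ∀ m : ℕ, ∑ k ∈ Icc 1 m, (-1 : R) ^ k * (c (k + 1) + c k)
      = (-1) ^ m * c (m + 1) - c 1 := by
  intro m
  induction m with
  | zero => simp
  | succ m ih =>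
    rw [Finset.sum_Icc_succ_top (by omega : 1 ≤ m + 1), ih, pow_succ]
    ring

lemma neg_one_pow_pred : (-1 : ZMod p) ^ (p - 1) = 1 := by
  have hp2 := hp.out.two_le
  have h := ZMod.pow_card (-1 : ZMod p)
  have e : p = (p - 1) + 1 := by omega
  have h2 : (-1 : ZMod p) ^ (p - 1) * (-1) = -1 := by
    rw [← pow_succ, ← e]; exact h
  have h1 : (-1 : ZMod p) ≠ 0 := neg_ne_zero.mpr one_ne_zero
  exact mul_right_cancel₀ h1 (h2.trans (one_mul (-1 : ZMod p)).symm)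

lemma A_rec (n : ℕ) :
    ∑ k ∈ Icc 1 (p - 1), (-1 : ZMod p) ^ k * (bell (n + 1 + k) : ZMod p)
      = (bell n : ZMod p) - ∑ k ∈ Icc 1 (p - 1), (-1 : ZMod p) ^ k * (bell (n + k) : ZMod p) := by
  have hp2 := hp.out.two_le
  have h := telescope (fun k => (bell (n + k) : ZMod p)) (p - 1)
  have e1 : ∀ k ∈ Icc 1 (p - 1), (-1 : ZMod p) ^ k * ((bell (n + (k + 1)) : ZMod p) + bell (n + k))
      = (-1 : ZMod p) ^ k * (bell (n + 1 + k) : ZMod p) + (-1 : ZMod p) ^ k * (bell (n + k) : ZMod p) := by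
    intro k _
    have : n + (k + 1) = n + 1 + k := by omega
    rw [this]
    ring
  rw [Finset.sum_congr rfl e1, sum_add_distrib] at h
  have e2 : n + (p - 1 + 1) = n + p := by omega
  rw [e2, neg_one_pow_pred, one_mul, touchard p n] at h
  have e3 : n + 1 = n + 1 := rfl
  -- h : A(n+1) + A(n) = (bell (n+1) + bell n) - bell (n + 1)
  have : (bell (n + 1) : ZMod p) + (bell n : ZMod p) - (bell (n + 1) : ZMod p)
      = (bell n : ZMod p) := by ring
  rw [this] at h
  linear_combination h

end

theorem alternating_bell_sum (n p : ℕ) (hp : p.Prime) :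
    (∑ k ∈ Icc 1 (p - 1), (-1 : ℤ) ^ k * bell (n + k)) ≡
      (∑ k ∈ range (n + 1), (-1 : ℤ) ^ (n - k) * n.choose k * bell k) [ZMOD p] := by
  haveI : Fact p.Prime := ⟨hp⟩
  rw [← ZMod.intCast_eq_intCast_iff]
  push_cast
  induction n with
  | zero =>
    simp only [zero_add, Nat.sub_zero]
    rw [sum_range_one]
    simp only [Nat.choose_self, Nat.cast_one, pow_zero, bell_zero]
    rw [base_sum p]
    norm_num
  | succ n ih =>
    have hV := congrArg (fun z : ℤ => (z : ZMod p)) (V_rec n)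
    push_cast at hV
    have e : ∀ k ∈ Icc 1 (p - 1), (-1 : ZMod p) ^ k * (bell (n + 1 + k) : ZMod p)
        = (-1 : ZMod p) ^ k * (bell (n + 1 + k) : ZMod p) := fun _ _ => rfl
    rw [A_rec p n, ih, hV]
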